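/- arXiv:1906.03105 — 2 statements merged into one kernel-verified Lean document; each statement's English description precedes it below -/
import Mathlib

section
/- Let Σ_B ∈ R^{n×n} be symmetric positive semidefinite, R ∈ R^{(m-n)×(m-n)} symmetric positive definite, M = 0, A ∈ R^{(m-n)×n}, and G = Σ_B Aᵀ (A Σ_B Aᵀ + R)⁻¹. Then the posterior covariance Σ_B - G A Σ_B is symmetric positive semidefinite, and Σ_B - (Σ_B - G A Σ_B) = G A Σ_B is also positive semidefinite; that is, LG reconciliation never increases the covariance of the bottom forecasts (in the Loewner order). -/
open Matrix

/-- LG reconciliation never increases the covariance of the bottom forecasts: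
0 ⪯ Σ_B - G A Σ_B ⪯ Σ_B in the Loewner order. -/
theorem stmt_10 {p n : ℕ} (SigB : Matrix (Fin n) (Fin n) ℝ) (R : Matrix (Fin p) (Fin p) ℝ)
    (A : Matrix (Fin p) (Fin n) ℝ)
    (hSig : SigB.PosSemidef) (hR : R.PosDef)
    (G : Matrix (Fin n) (Fin p) ℝ)
    (hG : G = SigB * Aᵀ * (A * SigB * Aᵀ + R)⁻¹) :
    (SigB - G * A * SigB).PosSemidef ∧ (G * A * SigB).PosSemidef := by
  set S := A * SigB * Aᵀ + R with hS
  have hSigT : SigBᵀ = SigB := hSig.isHermitian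
  have hSpd : S.PosDef := Matrix.PosDef.posSemidef_add
    (hSig.mul_mul_conjTranspose_same A) hR
  haveI : Invertible S := hSpd.isUnit.invertible
  have hSinv : S⁻¹.PosDef := hSpd.inv
  -- conjugate transpose relation
  have hconj : (A * SigB)ᴴ = SigB * Aᵀ := by
    simp [conjTranspose_mul, hSigT, Matrix.mul_assoc]
  -- second part
  have h2 : (G * A * SigB).PosSemidef := by
    have := hSinv.posSemidef.conjTranspose_mul_mul_same (A * SigB)
    rw [hconj] at this
    rw [hG]
    convert this using 1
    rw [Matrix.mul_assoc, Matrix.mul_assoc]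
  -- first part via Schur complement
  have hblock : (fromBlocks S (A * SigB) (A * SigB)ᴴ SigB).PosSemidef := by
    have hN : (fromRows A (1 : Matrix (Fin n) (Fin n) ℝ) * SigB *
        (fromRows A (1 : Matrix (Fin n) (Fin n) ℝ))ᴴ).PosSemidef :=
      hSig.mul_mul_conjTranspose_same _
    have hRB : (fromRows (1 : Matrix (Fin p) (Fin p) ℝ) (0 : Matrix (Fin n) (Fin p) ℝ) * R *
        (fromRows (1 : Matrix (Fin p) (Fin p) ℝ) (0 : Matrix (Fin n) (Fin p) ℝ))ᴴ).PosSemidef :=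
      hR.posSemidef.mul_mul_conjTranspose_same _
    have e1 : fromRows A (1 : Matrix (Fin n) (Fin n) ℝ) * SigB *
        (fromRows A (1 : Matrix (Fin n) (Fin n) ℝ))ᴴ =
        fromBlocks (A * SigB * Aᵀ) (A * SigB) (SigB * Aᵀ) SigB := by
      rw [fromRows_mul, conjTranspose_fromRows_eq_fromCols_conjTranspose,
        fromRows_mul_fromCols]
      simp [hSigT, Matrix.mul_assoc]
    have e2 : fromRows (1 : Matrix (Fin p) (Fin p) ℝ) (0 : Matrix (Fin n) (Fin p) ℝ) * R *
        (fromRows (1 : Matrix (Fin p) (Fin p) ℝ) (0 : Matrix (Fin n) (Fin p) ℝ))ᴴ =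
        fromBlocks R 0 0 0 := by
      rw [fromRows_mul, conjTranspose_fromRows_eq_fromCols_conjTranspose,
        fromRows_mul_fromCols]
      simp
    have := (e1 ▸ hN).add (e2 ▸ hRB)
    rw [Matrix.fromBlocks_add] at this
    simpa [hS, hSigT] using this
  have h1 := (Matrix.PosDef.fromBlocks₁₁ (A * SigB) SigB hSpd).mp hblock
  rw [hconj] at h1
  refine ⟨?_, h2⟩
  rw [hG]
  rw [Matrix.mul_assoc (SigB * Aᵀ * S⁻¹) A SigB]
  exact h1
end

section
/- Let W ∈ R^{m×m} be symmetric positive definite and S ∈ R^{m×n} of full column rank. Among all matrices P ∈ R^{n×m} with P S = I_n, the matrix P* = (Sᵀ W⁻¹ S)⁻¹ Sᵀ W⁻¹ minimizes the trace of S P W Pᵀ Sᵀ; i.e., for every P with P S = I_n, trace(S P* W P*ᵀ Sᵀ) ≤ trace(S P W Pᵀ Sᵀ). -/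
open Matrix

lemma posSemidef_trace_nonneg {k : ℕ} {M : Matrix (Fin k) (Fin k) ℝ}
    (hM : M.PosSemidef) : 0 ≤ M.trace := by
  rw [Matrix.trace]
  apply Finset.sum_nonneg
  intro i _
  exact hM.diag_nonneg

lemma posDef_StWS {m n : ℕ} (W : Matrix (Fin m) (Fin m) ℝ) (hW : W.PosDef)
    (S : Matrix (Fin m) (Fin n) ℝ) (hS : Function.Injective S.mulVec) :
    (Sᵀ * W⁻¹ * S).PosDef := by
  have hWi := hW.inv
  have hsd : (Sᵀ * W⁻¹ * S).PosSemidef := by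
    have := hWi.posSemidef.conjTranspose_mul_mul_same S
    simpa [Matrix.conjTranspose_eq_transpose_of_trivial] using this
  refine Matrix.PosDef.of_dotProduct_mulVec_pos hsd.1 (fun x hx => ?_)
  have hSx : S *ᵥ x ≠ 0 := by
    intro h
    apply hx
    apply hS
    simpa using h
  have := hWi.dotProduct_mulVec_pos hSx
  simp only [← Matrix.mulVec_mulVec, dotProduct_mulVec, Matrix.vecMul_transpose,
    star_trivial] at this ⊢
  exact this

/-- MinT optimality: among all P with P S = I, the MinT matrix minimizes the trace
of the covariance S P W Pᵀ Sᵀ of the reconciled forecast errors. -/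
theorem stmt_12 {m n : ℕ} (W : Matrix (Fin m) (Fin m) ℝ) (hW : W.PosDef)
    (S : Matrix (Fin m) (Fin n) ℝ) (hS : Function.Injective S.mulVec)
    (Pstar : Matrix (Fin n) (Fin m) ℝ) (hPstar : Pstar = (Sᵀ * W⁻¹ * S)⁻¹ * Sᵀ * W⁻¹) :
    ∀ P : Matrix (Fin n) (Fin m) ℝ, P * S = 1 →
      (S * Pstar * W * Pstarᵀ * Sᵀ).trace ≤ (S * P * W * Pᵀ * Sᵀ).trace := by
  intro P hP
  set A := Sᵀ * W⁻¹ * S with hA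
  have hApd : A.PosDef := posDef_StWS W hW S hS
  have hAunit : IsUnit A := hApd.isUnit
  have hWunit : IsUnit W := hW.isUnit
  have hWsymm : Wᵀ = W := by
    have := hW.1.eq
    simpa [Matrix.conjTranspose_eq_transpose_of_trivial] using this
  have hAiA : A⁻¹ * A = 1 := Matrix.nonsing_inv_mul A ((Matrix.isUnit_iff_isUnit_det A).mp hAunit)
  have hWiW : W⁻¹ * W = 1 := Matrix.nonsing_inv_mul W ((Matrix.isUnit_iff_isUnit_det W).mp hWunit)
  have hPstarS : Pstar * S = 1 := by
    have h : Pstar * S = A⁻¹ * A := by rw [hPstar, hA]; simp only [Matrix.mul_assoc]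
    rw [h, hAiA]
  set D := P - Pstar with hD
  have hDS : D * S = 0 := by
    rw [hD, Matrix.sub_mul, hP, hPstarS, sub_self]
  have hcross : Pstar * W * Dᵀ = 0 := by
    rw [hPstar]
    have : A⁻¹ * Sᵀ * W⁻¹ * W = A⁻¹ * Sᵀ := by
      rw [Matrix.mul_assoc (A⁻¹ * Sᵀ), hWiW, Matrix.mul_one]
    rw [this, Matrix.mul_assoc, ← Matrix.transpose_mul, hDS]
    simp
  have hcross' : D * W * Pstarᵀ = 0 := by
    have := congrArg Matrix.transpose hcross
    simpa [Matrix.transpose_mul, hWsymm, Matrix.mul_assoc] using this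
  have hPdef : P = Pstar + D := by rw [hD]; abel
  have hsplit : S * P * W * Pᵀ * Sᵀ
      = S * Pstar * W * Pstarᵀ * Sᵀ + S * D * W * Dᵀ * Sᵀ := by
    have h12 : S * Pstar * W * Dᵀ * Sᵀ = 0 := by
      calc S * Pstar * W * Dᵀ * Sᵀ = S * ((Pstar * W * Dᵀ) * Sᵀ) := by
            simp only [Matrix.mul_assoc]
        _ = 0 := by rw [hcross]; simp
    have h21 : S * D * W * Pstarᵀ * Sᵀ = 0 := by
      calc S * D * W * Pstarᵀ * Sᵀ = S * ((D * W * Pstarᵀ) * Sᵀ) := by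
            simp only [Matrix.mul_assoc]
        _ = 0 := by rw [hcross']; simp
    rw [hPdef, Matrix.transpose_add]
    simp only [Matrix.mul_add, Matrix.add_mul]
    rw [h12, h21]
    abel
  rw [hsplit, Matrix.trace_add]
  have hpsd : (S * D * W * Dᵀ * Sᵀ).PosSemidef := by
    have := hW.posSemidef.mul_mul_conjTranspose_same (S * D)
    simpa [Matrix.conjTranspose_eq_transpose_of_trivial, Matrix.transpose_mul,
      Matrix.mul_assoc] using this
  linarith [posSemidef_trace_nonneg hpsd]
end
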